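/- arXiv:2401.09270 — 5 statements merged into one kernel-verified Lean document; each statement's English description precedes it below -/
import Mathlib

section
/- If types K and J are searchable, then their binary product K × J is searchable. -/
/-- A type `K` is searchable if for every decidable predicate `p : K → Prop` there
exists `k₀ : K` such that `(∃ k, p k) → p k₀`. -/
def Searchable (K : Type*) : Prop :=
  ∀ (p : K → Prop), (∀ k, Decidable (p k)) → ∃ k₀, (∃ k, p k) → p k₀

/-- If `K` and `J` are searchable, then so is `K × J`. -/
theorem searchable_prod {K J : Type*} (hK : Searchable K) (hJ : Searchable J) :
    Searchable (K × J) := by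
  intro p hp
  classical
  choose f hf using fun k => hJ (fun j => p (k, j)) (fun j => hp (k, j))
  obtain ⟨k₀, hk₀⟩ := hK (fun k => p (k, f k)) (fun k => hp (k, f k))
  refine ⟨(k₀, f k₀), ?_⟩
  rintro ⟨⟨k, j⟩, hkj⟩
  exact hk₀ ⟨k, hf k ⟨j, hkj⟩⟩
end

section
/- Tychonoff theorem for uniformly continuously searchable types: if T : ℕ → Type is a family of uniformly continuously searchable closeness spaces, then the countable product Π T, equipped with the countable product closeness function, is uniformly continuously searchable. -/
universe u

/-- The countable product closeness function, defined diagonally: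
`c(α,β)(0) = c₀(α₀,β₀)(0)` and
`c(α,β)(n+1) = min (c₀(α₀,β₀)(n+1)) (c_tail(tail α, tail β)(n))`. -/
def prodC : {T : ℕ → Type u} → (∀ n, T n → T n → ℕ → Bool) →
    (∀ n, T n) → (∀ n, T n) → ℕ → Bool
  | _, cs, α, β, 0 => cs 0 (α 0) (β 0) 0
  | T, cs, α, β, n + 1 =>
      min (cs 0 (α 0) (β 0) (n + 1))
        (prodC (T := fun k => T (k + 1)) (fun k => cs (k + 1))
          (fun k => α (k + 1)) (fun k => β (k + 1)) n)

private def consF {T : ℕ → Type u} (x : T 0) (β : ∀ k, T (k + 1)) : ∀ n, T n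
  | 0 => x
  | n + 1 => β n

private lemma consF_eta {T : ℕ → Type u} (α : ∀ n, T n) :
    consF (α 0) (fun k => α (k + 1)) = α := by
  funext n; cases n <;> rfl

private lemma min_true_right {b : Bool} (h : min true b = true) : b = true := by
  cases b <;> simpa using h

private lemma prodC_refl : ∀ (i : ℕ) {T : ℕ → Type u}
    (cs : ∀ n, T n → T n → ℕ → Bool)
    (hrefl : ∀ n (x : T n) j, cs n x x j = true) (α : ∀ n, T n),
    prodC cs α α i = true
  | 0, T, cs, hrefl, α => hrefl 0 (α 0) 0
  | (i + 1), T, cs, hrefl, α => by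
      show min (cs 0 (α 0) (α 0) (i + 1)) _ = true
      rw [hrefl 0 (α 0) (i + 1),
        prodC_refl i (fun k => cs (k + 1)) (fun n x j => hrefl (n + 1) x j)
          (fun k => α (k + 1))]
      rfl

private lemma tychonoff_aux : ∀ (δ : ℕ) {T : ℕ → Type u}
    (cs : ∀ n, T n → T n → ℕ → Bool)
    (hrefl : ∀ n (x : T n) j, cs n x x j = true)
    (hsearch : ∀ n, ∀ (p : T n → Prop), (∀ x, Decidable (p x)) →
      (∃ δ : ℕ, ∀ x y, (∀ i, i < δ → cs n x y i = true) → (p x ↔ p y)) →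
      ∃ x₀, (∃ x, p x) → p x₀)
    (p : (∀ n, T n) → Prop), (∀ α, Decidable (p α)) →
    (∀ α β, (∀ i, i < δ → prodC cs α β i = true) → (p α ↔ p β)) →
    ∃ α₀, (∃ α, p α) → p α₀ := by
  intro δ
  induction δ with
  | zero =>
    intro T cs hrefl hsearch p dec hmod
    have pt : ∀ n, T n := fun n =>
      Classical.choose (hsearch n (fun _ => True) (fun _ => inferInstance)
        ⟨0, fun _ _ _ => Iff.rfl⟩)
    exact ⟨pt, fun ⟨α, hα⟩ =>
      (hmod α pt (fun i hi => absurd hi (Nat.not_lt_zero i))).mp hα⟩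
  | succ δ IH =>
    intro T cs hrefl hsearch p dec hmod
    -- search the tail product for every head value x
    have hq : ∀ x : T 0, ∃ β₀, (∃ β, p (consF x β)) → p (consF x β₀) := by
      intro x
      refine IH (fun k => cs (k + 1)) (fun n y j => hrefl (n + 1) y j)
        (fun n => hsearch (n + 1)) (fun β => p (consF x β)) (fun β => dec _) ?_
      intro β β' h
      apply hmod
      intro i hi
      cases i with
      | zero => exact hrefl 0 x 0
      | succ n =>
        show min (cs 0 x x (n + 1))
          (prodC (fun k => cs (k + 1)) β β' n) = true
        rw [hrefl 0 x (n + 1), h n (Nat.lt_of_succ_lt_succ hi)]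
        rfl
    let ε : T 0 → ∀ k, T (k + 1) := fun x => Classical.choose (hq x)
    have hε : ∀ x, (∃ β, p (consF x β)) → p (consF x (ε x)) :=
      fun x => Classical.choose_spec (hq x)
    -- key: if x, y are (δ+1)-close then p (consF x β) ↔ p (consF y β)
    have key : ∀ x y : T 0, (∀ i, i < δ + 1 → cs 0 x y i = true) →
        ∀ β, (p (consF x β) ↔ p (consF y β)) := by
      intro x y hxy β
      apply hmod
      intro i hi
      cases i with
      | zero => exact hxy 0 hi
      | succ n =>
        show min (cs 0 x y (n + 1))
          (prodC (fun k => cs (k + 1)) β β n) = true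
        rw [hxy (n + 1) hi,
          prodC_refl n (fun k => cs (k + 1)) (fun m z j => hrefl (m + 1) z j) β]
        rfl
    -- search the head
    have hr : ∃ x₀, (∃ x, p (consF x (ε x))) → p (consF x₀ (ε x₀)) := by
      refine hsearch 0 (fun x => p (consF x (ε x))) (fun x => dec _) ⟨δ + 1, ?_⟩
      intro x y hxy
      constructor
      · intro hx
        exact hε y ⟨ε x, (key x y hxy (ε x)).mp hx⟩
      · intro hy
        exact hε x ⟨ε y, (key x y hxy (ε y)).mpr hy⟩
    obtain ⟨x₀, hx₀⟩ := hr
    refine ⟨consF x₀ (ε x₀), ?_⟩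
    rintro ⟨α, hα⟩
    apply hx₀
    refine ⟨α 0, hε (α 0) ⟨fun k => α (k + 1), ?_⟩⟩
    rwa [consF_eta]

/-- Tychonoff theorem for uniformly continuously searchable closeness spaces:
if each `T n` is a closeness space (via `cs n`) that is uniformly continuously
searchable, then the countable product `Π T`, with the countable product
closeness function, is uniformly continuously searchable. -/
theorem tychonoff {T : ℕ → Type u} (cs : ∀ n, T n → T n → ℕ → Bool)
    (hdec : ∀ n x y i, cs n x y (i + 1) = true → cs n x y i = true)
    (heq : ∀ n (x y : T n), cs n x y = (fun _ => true) ↔ x = y)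
    (hsymm : ∀ n (x y : T n), cs n x y = cs n y x)
    (hultra : ∀ n (x y z : T n) i,
      min (cs n x y i) (cs n y z i) = true → cs n x z i = true)
    (hsearch : ∀ n, ∀ (p : T n → Prop), (∀ x, Decidable (p x)) →
      (∃ δ : ℕ, ∀ x y, (∀ i, i < δ → cs n x y i = true) → (p x ↔ p y)) →
      ∃ x₀, (∃ x, p x) → p x₀) :
    ∀ (p : (∀ n, T n) → Prop), (∀ α, Decidable (p α)) →
      (∃ δ : ℕ, ∀ α β, (∀ i, i < δ → prodC cs α β i = true) → (p α ↔ p β)) →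
      ∃ α₀, (∃ α, p α) → p α₀ := by
  intro p dec hmod
  obtain ⟨δ, hδ⟩ := hmod
  have hrefl : ∀ n (x : T n) j, cs n x x j = true := fun n x j => by
    rw [(heq n x x).mpr rfl]
  exact tychonoff_aux δ cs hrefl hsearch p dec hδ
end

section
/- In an iterative midpoint algebra (A, ⊕, M), any two functions M₁, M₂ : (ℕ → A) → A both satisfying the two iteration sub-properties are pointwise equal: M₁(α) = M₂(α) for all α. -/
/-- In an iterative midpoint algebra, any two operators `M₁, M₂` satisfying the
two iteration sub-properties are pointwise equal. -/
theorem iterative_uniqueness {A : Type*} (op : A → A → A)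
    (hidem : ∀ a, op a a = a)
    (hcomm : ∀ a b, op a b = op b a)
    (htransp : ∀ a b c d, op (op a b) (op c d) = op (op a c) (op b d))
    (M₁ M₂ : (ℕ → A) → A)
    (hM₁1 : ∀ α : ℕ → A, M₁ α = op (α 0) (M₁ (fun n => α (n + 1))))
    (hM₁2 : ∀ α β : ℕ → A, (∀ i, β i = op (α i) (β (i + 1))) → β 0 = M₁ α)
    (hM₂1 : ∀ α : ℕ → A, M₂ α = op (α 0) (M₂ (fun n => α (n + 1))))
    (hM₂2 : ∀ α β : ℕ → A, (∀ i, β i = op (α i) (β (i + 1))) → β 0 = M₂ α) :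
    ∀ α : ℕ → A, M₁ α = M₂ α := by
  intro α
  have h : (fun i => M₂ (fun n => α (n + i))) 0 = M₁ α := by
    refine hM₁2 α (fun i => M₂ fun n => α (n + i)) ?_
    intro i
    show M₂ (fun n => α (n + i)) = op (α i) (M₂ fun n => α (n + (i + 1)))
    have := hM₂1 (fun n => α (n + i))
    replace this : M₂ (fun n => α (n + i)) = op (α (0 + i)) (M₂ fun n => α (n + 1 + i)) := this
    rw [this]
    have h1 : (fun n => α (n + 1 + i)) = (fun n => α (n + (i + 1))) := by
      funext n; congr 1; omega
    simp [h1]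
  simpa using h.symm
end

section
/- In a transpositional magma (A, ⊕) that is iterative via M, the operator M satisfies the homomorphic property: M(θ) ⊕ M(ζ) = M(λ i, θ(i) ⊕ ζ(i)) for all sequences θ, ζ : ℕ → A. -/
/-- In a transpositional magma that is iterative via `M`, the operator `M`
satisfies the homomorphic property
`M θ ⊕ M ζ = M (λ i, θ i ⊕ ζ i)`. -/
theorem M_hom {A : Type*} (op : A → A → A)
    (htransp : ∀ a b c d, op (op a b) (op c d) = op (op a c) (op b d))
    (M : (ℕ → A) → A)
    (hM1 : ∀ α : ℕ → A, M α = op (α 0) (M (fun n => α (n + 1))))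
    (hM2 : ∀ α β : ℕ → A, (∀ i, β i = op (α i) (β (i + 1))) → β 0 = M α) :
    ∀ θ ζ : ℕ → A, op (M θ) (M ζ) = M (fun i => op (θ i) (ζ i)) := by
  intro θ ζ
  have key := hM2 (fun i => op (θ i) (ζ i))
      (fun i => op (M (fun n => θ (n + i))) (M (fun n => ζ (n + i)))) ?_
  · simpa using key
  · intro i
    rw [hM1 (fun n => θ (n + i)), hM1 (fun n => ζ (n + i)), htransp]
    have h1 : (fun n => θ (n + 1 + i)) = (fun n => θ (n + (i + 1))) := by
      funext n; ring_nf
    have h2 : (fun n => ζ (n + 1 + i)) = (fun n => ζ (n + (i + 1))) := by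
      funext n; ring_nf
    simp [h1, h2]
end

section
/- In an iterative midpoint algebra (A, ⊕, M), every midpoint homomorphism h : A → A (i.e., h(a ⊕ b) = h(a) ⊕ h(b)) is an M-homomorphism: h(M(α)) = M(λ n, h(α(n))) for every sequence α : ℕ → A. -/
/-- In an iterative midpoint algebra, every midpoint homomorphism is an
`M`-homomorphism: `h (M α) = M (λ n, h (α n))`. -/
theorem midpoint_hom_is_M_hom {A : Type*} (op : A → A → A)
    (hidem : ∀ a, op a a = a)
    (hcomm : ∀ a b, op a b = op b a)
    (htransp : ∀ a b c d, op (op a b) (op c d) = op (op a c) (op b d))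
    (M : (ℕ → A) → A)
    (hM1 : ∀ α : ℕ → A, M α = op (α 0) (M (fun n => α (n + 1))))
    (hM2 : ∀ α β : ℕ → A, (∀ i, β i = op (α i) (β (i + 1))) → β 0 = M α)
    (h : A → A)
    (hhom : ∀ a b, h (op a b) = op (h a) (h b)) :
    ∀ α : ℕ → A, h (M α) = M (fun n => h (α n)) := by
  intro α
  have key : ∀ i, h (M (fun n => α (n + i))) =
      op (h (α i)) (h (M (fun n => α (n + (i + 1))))) := by
    intro i
    conv_lhs => rw [hM1 (fun n => α (n + i))]
    rw [hhom]
    congr 2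
    · simp
    · congr 1
      funext n
      ring_nf
  have := hM2 (fun n => h (α n)) (fun i => h (M (fun n => α (n + i)))) key
  simpa using this
end
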